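/- Let ξ₁,...,ξₙ be independent centered random variables with ξᵢ ≤ 1 almost surely, and let σ² = ∑ᵢ E[ξᵢ²]. Then the cumulant function Ψ_n(λ) = ∑ᵢ log E[e^{λξᵢ}] satisfies, for all λ ≥ 0, Ψ_n(λ) ≤ n·log( (1/(1+σ²/n))·e^{−λσ²/n} + (σ²/n/(1+σ²/n))·e^{λ} ). -/

import Mathlib

open MeasureTheory ProbabilityTheory Real

lemma exp_le_quad_of_nonpos {y : ℝ} (hy : y ≤ 0) : Real.exp y ≤ 1 + y + y ^ 2 / 2 := by
  have h1 : 1 + (-y) + (-y) ^ 2 / 2 ≤ Real.exp (-y) := Real.quadratic_le_exp_of_nonneg (by linarith)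
  have h2 : Real.exp y * Real.exp (-y) = 1 := by rw [← Real.exp_add]; simp
  nlinarith [Real.exp_pos y, Real.exp_pos (-y)]

lemma core_series {y u : ℝ} (h0 : 0 ≤ y) (hyu : y ≤ u) :
    (Real.exp y - 1 - y) * u ^ 2 ≤ (Real.exp u - 1 - u) * y ^ 2 := by
  have hexp : ∀ t : ℝ, Real.exp t - 1 - t = ∑' n : ℕ, t ^ (n + 2) / ((n + 2).factorial : ℝ) := by
    intro t
    have hs : Summable (fun n : ℕ => t ^ n / (n.factorial : ℝ)) := Real.summable_pow_div_factorial t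
    have := hs.sum_add_tsum_nat_add 2
    have hexp2 : Real.exp t = ∑' n : ℕ, t ^ n / (n.factorial : ℝ) := by
      rw [Real.exp_eq_exp_ℝ, NormedSpace.exp_eq_tsum_div]
    rw [hexp2, ← this]
    simp [Finset.sum_range_succ]
    ring
  rw [hexp y, hexp u, ← tsum_mul_right, ← tsum_mul_right]
  have hsy : Summable (fun n : ℕ => y ^ (n + 2) / ((n + 2).factorial : ℝ) * u ^ 2) :=
    (((summable_nat_add_iff 2).2 (Real.summable_pow_div_factorial y))).mul_right _
  have hsu : Summable (fun n : ℕ => u ^ (n + 2) / ((n + 2).factorial : ℝ) * y ^ 2) :=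
    (((summable_nat_add_iff 2).2 (Real.summable_pow_div_factorial u))).mul_right _
  refine Summable.tsum_le_tsum (fun n => ?_) hsy hsu
  have hyn : y ^ n ≤ u ^ n := pow_le_pow_left₀ h0 hyu n
  have hfac : (0:ℝ) < ((n + 2).factorial : ℝ) := by positivity
  rw [div_mul_eq_mul_div, div_mul_eq_mul_div, div_le_div_iff₀ hfac hfac]
  have : y ^ (n + 2) * u ^ 2 ≤ u ^ (n + 2) * y ^ 2 := by
    calc y ^ (n + 2) * u ^ 2 = y ^ n * (y ^ 2 * u ^ 2) := by ring
    _ ≤ u ^ n * (y ^ 2 * u ^ 2) := by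
        apply mul_le_mul_of_nonneg_right hyn; positivity
    _ = u ^ (n + 2) * y ^ 2 := by ring
  nlinarith [hfac]

lemma core_ineq {y u : ℝ} (hu : 0 ≤ u) (hyu : y ≤ u) :
    (Real.exp y - 1 - y) * u ^ 2 ≤ (Real.exp u - 1 - u) * y ^ 2 := by
  rcases le_or_gt 0 y with h | h
  · exact core_series h hyu
  · have ha := exp_le_quad_of_nonpos h.le
    have hb := Real.quadratic_le_exp_of_nonneg hu
    nlinarith [sq_nonneg y, sq_nonneg u, sq_nonneg (y*u)]

lemma KIprime {s t : ℝ} (hs : 0 ≤ s) (ht : 0 ≤ t) :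
    Real.exp (-s) + 2*t + 2*s + 2*s*t + s^2*t ≤ Real.exp s + 2*t*Real.exp s := by
  have hcube : 1 + s + s^2/2 + s^3/6 ≤ Real.exp s := by
    have h := Real.sum_le_exp_of_nonneg hs 4
    have : ∑ i ∈ Finset.range 4, s ^ i / (i.factorial : ℝ) = 1 + s + s^2/2 + s^3/6 := by
      simp [Finset.sum_range_succ, Nat.factorial]
    linarith [h, this.le, this.ge]
  have hneg : Real.exp (-s) ≤ 1 - s + s^2/2 := by
    have := exp_le_quad_of_nonpos (neg_nonpos.2 hs)
    nlinarith
  have hcub3 : (0:ℝ) ≤ s^3/6 := by positivity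
  nlinarith [mul_nonneg ht (by nlinarith : (0:ℝ) ≤ Real.exp s - 1 - s - s^2/2)]

lemma KI {l t : ℝ} (hl : 0 ≤ l) (ht : 0 < t) :
    (l^2 * Real.exp (-(l*t)) * (Real.exp (-(l*t)) + t * Real.exp l)
      - (Real.exp l - l * Real.exp (-(l*t)))^2)
      / (Real.exp (-(l*t)) + t * Real.exp l)^2 + 1/(1+t)^2 ≤ 0 := by
  have hP : (0:ℝ) < Real.exp l := Real.exp_pos _
  have hQ : (0:ℝ) < Real.exp (l*t) := Real.exp_pos _
  set P := Real.exp l with hPdef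
  set Q := Real.exp (l*t) with hQdef
  have hQinv : Real.exp (-(l*t)) = Q⁻¹ := by rw [Real.exp_neg]
  have h := KIprime (s := l*(1+t)) (t := t) (by positivity) ht.le
  have hes : Real.exp (l*(1+t)) = P * Q := by
    rw [hPdef, hQdef, ← Real.exp_add]; ring_nf
  have hesn : Real.exp (-(l*(1+t))) = (P * Q)⁻¹ := by
    rw [Real.exp_neg, hes]
  rw [hesn, hes] at h
  rw [hQinv]
  set s := l*(1+t) with hsdef
  -- key algebraic identity
  have hA : (0:ℝ) < Q⁻¹ + t * P := by positivity
  have e1 : (1+t)^2 * ((P - l*Q⁻¹)^2 - l^2*Q⁻¹*(Q⁻¹ + t*P)) - (Q⁻¹ + t*P)^2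
      = ((P*Q + 2*t*(P*Q)) - ((P*Q)⁻¹ + 2*t + 2*s + 2*s*t + s^2*t)) * (P*Q⁻¹) := by
    rw [hsdef]
    field_simp
    ring
  have key : (Q⁻¹ + t*P)^2 ≤ (1+t)^2 * ((P - l*Q⁻¹)^2 - l^2*Q⁻¹*(Q⁻¹ + t*P)) := by
    nlinarith [mul_nonneg (by linarith : (0:ℝ) ≤ (P*Q + 2*t*(P*Q)) - ((P*Q)⁻¹ + 2*t + 2*s + 2*s*t + s^2*t)) (by positivity : (0:ℝ) ≤ P*Q⁻¹)]
  have ht2 : (0:ℝ) < (1+t)^2 := by positivity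
  have hA2 : (0:ℝ) < (Q⁻¹ + t*P)^2 := by positivity
  have final : 1/(1+t)^2 ≤ ((P - l*Q⁻¹)^2 - l^2*Q⁻¹*(Q⁻¹ + t*P))/(Q⁻¹ + t*P)^2 := by
    rw [div_le_div_iff₀ ht2 hA2]
    nlinarith [key]
  have hid : (l^2 * Q⁻¹ * (Q⁻¹ + t * P) - (P - l * Q⁻¹)^2) / (Q⁻¹ + t * P)^2
      = -(((P - l*Q⁻¹)^2 - l^2*Q⁻¹*(Q⁻¹ + t*P))/(Q⁻¹ + t*P)^2) := by ring
  rw [hid]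
  linarith

lemma pointwise_bound {l v x : ℝ} (hl : 0 ≤ l) (hv : 0 ≤ v) (hx : x ≤ 1) :
    Real.exp (l * x) ≤ Real.exp (-(l * v)) * (1 + l * (x + v))
      + Real.exp (-(l * v)) * (Real.exp (l * (1 + v)) - 1 - l * (1 + v)) / (1 + v) ^ 2
        * (x + v) ^ 2 := by
  have hv1 : (0:ℝ) < 1 + v := by linarith
  have key : Real.exp (l * (x + v)) ≤ 1 + l * (x + v)
      + (Real.exp (l * (1 + v)) - 1 - l * (1 + v)) / (1 + v) ^ 2 * (x + v) ^ 2 := by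
    rcases eq_or_lt_of_le hl with h0 | hlpos
    · simp [← h0]
    · have hu : 0 ≤ l * (1 + v) := by positivity
      have hyu : l * (x + v) ≤ l * (1 + v) := by nlinarith
      have hc := core_ineq hu hyu
      have hu2 : (0:ℝ) < (l * (1 + v)) ^ 2 := by positivity
      rw [← sub_nonneg]
      have expand : 1 + l * (x + v)
          + (Real.exp (l * (1 + v)) - 1 - l * (1 + v)) / (1 + v) ^ 2 * (x + v) ^ 2
          - Real.exp (l * (x + v))
          = ((Real.exp (l * (1 + v)) - 1 - l * (1 + v)) * (l * (x + v)) ^ 2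
             - (Real.exp (l * (x + v)) - 1 - l * (x + v)) * (l * (1 + v)) ^ 2)
            / (l * (1 + v)) ^ 2 := by
        field_simp
        ring
      rw [expand]
      exact div_nonneg (by linarith) hu2.le
  have hsplit : Real.exp (l * x) = Real.exp (-(l * v)) * Real.exp (l * (x + v)) := by
    rw [← Real.exp_add]; ring_nf
  have he : (0:ℝ) < Real.exp (-(l * v)) := Real.exp_pos _
  have h2 := mul_le_mul_of_nonneg_left key he.le
  rw [hsplit]
  calc Real.exp (-(l * v)) * Real.exp (l * (x + v)) ≤ _ := h2
  _ = Real.exp (-(l * v)) * (1 + l * (x + v))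
      + Real.exp (-(l * v)) * (Real.exp (l * (1 + v)) - 1 - l * (1 + v)) / (1 + v) ^ 2
        * (x + v) ^ 2 := by ring

lemma mgf_step {Ω : Type*} [MeasurableSpace Ω] (μ : Measure Ω) [IsProbabilityMeasure μ]
    (X : Ω → ℝ) (l : ℝ) (hl : 0 ≤ l) (hX : Measurable X)
    (hint : Integrable X μ) (hmean : ∫ ω, X ω ∂μ = 0)
    (hbdd : ∀ᵐ ω ∂μ, X ω ≤ 1) (hint2 : Integrable (fun ω => (X ω) ^ 2) μ) :
    Integrable (fun ω => Real.exp (l * X ω)) μ ∧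
    ∫ ω, Real.exp (l * X ω) ∂μ
      ≤ 1 / (1 + ∫ ω, (X ω) ^ 2 ∂μ) * Real.exp (-(l * ∫ ω, (X ω) ^ 2 ∂μ))
        + (∫ ω, (X ω) ^ 2 ∂μ) / (1 + ∫ ω, (X ω) ^ 2 ∂μ) * Real.exp l := by
  set v : ℝ := ∫ ω, (X ω) ^ 2 ∂μ with hvdef
  have hv : 0 ≤ v := integral_nonneg (fun ω => sq_nonneg _)
  have hv1 : (0:ℝ) < 1 + v := by linarith
  set C : ℝ := Real.exp (-(l * v)) * (Real.exp (l * (1 + v)) - 1 - l * (1 + v)) / (1 + v) ^ 2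
    with hCdef
  set a : ℝ := Real.exp (-(l * v)) * (1 + l * v) + C * v ^ 2 with hadef
  set b : ℝ := Real.exp (-(l * v)) * l + C * (2 * v) with hbdef
  set q : Ω → ℝ := fun ω => a + (b * X ω + C * X ω ^ 2) with hqdef
  have hqint : Integrable q μ :=
    (integrable_const a).add ((hint.const_mul b).add (hint2.const_mul C))
  have hle : ∀ᵐ ω ∂μ, Real.exp (l * X ω) ≤ q ω := by
    filter_upwards [hbdd] with ω hω
    have h := pointwise_bound hl hv hω
    have : q ω = Real.exp (-(l * v)) * (1 + l * (X ω + v))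
        + C * (X ω + v) ^ 2 := by
      rw [hqdef, hadef, hbdef]; ring
    rw [this]
    exact h
  have hintexp : Integrable (fun ω => Real.exp (l * X ω)) μ := by
    apply Integrable.mono' hqint
    · exact ((Real.measurable_exp.comp (hX.const_mul l)).aestronglyMeasurable)
    · filter_upwards [hle] with ω hω
      rw [Real.norm_eq_abs, abs_of_pos (Real.exp_pos _)]
      exact hω
  refine ⟨hintexp, ?_⟩
  have h1 : ∫ ω, Real.exp (l * X ω) ∂μ ≤ ∫ ω, q ω ∂μ := integral_mono_ae hintexp hqint hle
  have h2 : ∫ ω, q ω ∂μ = a + C * v := by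
    have hsum : Integrable (fun ω => b * X ω + C * X ω ^ 2) μ :=
      (hint.const_mul b).add (hint2.const_mul C)
    rw [hqdef]
    rw [integral_add (integrable_const a) hsum,
      integral_add (hint.const_mul b) (hint2.const_mul C),
      integral_const_mul, integral_const_mul]
    simp [hmean, hvdef]
  have h3 : a + C * v
      = 1 / (1 + v) * Real.exp (-(l * v)) + v / (1 + v) * Real.exp l := by
    have hexp : Real.exp l = Real.exp (-(l * v)) * Real.exp (l * (1 + v)) := by
      rw [← Real.exp_add]; ring_nf
    rw [hadef, hCdef, hexp]
    field_simp
    ring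
  linarith

lemma hasDerivAt_A (l t : ℝ) :
    HasDerivAt (fun t => Real.exp (-(l*t)) + t * Real.exp l)
      (Real.exp l - l * Real.exp (-(l*t))) t := by
  have h1 : HasDerivAt (fun t : ℝ => -(l*t)) (-l) t := by
    have := ((hasDerivAt_id t).const_mul l).neg
    simp only [id, mul_one] at this
    exact this
  have h2 : HasDerivAt (fun t : ℝ => Real.exp (-(l*t))) (Real.exp (-(l*t)) * (-l)) t :=
    (Real.hasDerivAt_exp _).comp t h1
  have h3 : HasDerivAt (fun t : ℝ => t * Real.exp l) (Real.exp l) t := by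
    simpa using (hasDerivAt_id t).mul_const (Real.exp l)
  have := h2.add h3
  exact this.congr_deriv (by ring)

lemma hasDerivAt_N (l t : ℝ) :
    HasDerivAt (fun t => Real.exp l - l * Real.exp (-(l*t)))
      (l^2 * Real.exp (-(l*t))) t := by
  have h1 : HasDerivAt (fun t : ℝ => -(l*t)) (-l) t := by
    have := ((hasDerivAt_id t).const_mul l).neg
    simp only [id, mul_one] at this
    exact this
  have h2 : HasDerivAt (fun t : ℝ => Real.exp (-(l*t))) (Real.exp (-(l*t)) * (-l)) t :=
    (Real.hasDerivAt_exp _).comp t h1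
  have := ((h2.const_mul l).const_sub (Real.exp l))
  exact this.congr_deriv (by ring)

lemma concave_psi {l : ℝ} (hl : 0 ≤ l) :
    ConcaveOn ℝ (Set.Ici (0:ℝ))
      (fun t => Real.log (Real.exp (-(l*t)) + t * Real.exp l) - Real.log (1+t)) := by
  have hApos : ∀ t : ℝ, 0 ≤ t → 0 < Real.exp (-(l*t)) + t * Real.exp l := by
    intro t ht
    have := Real.exp_pos (-(l*t)); have := Real.exp_pos l
    nlinarith
  apply concaveOn_of_hasDerivWithinAt2_nonpos (convex_Ici 0)
    (f' := fun t => (Real.exp l - l * Real.exp (-(l*t)))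
        / (Real.exp (-(l*t)) + t * Real.exp l) - 1/(1+t))
    (f'' := fun t => (l^2 * Real.exp (-(l*t)) * (Real.exp (-(l*t)) + t * Real.exp l)
        - (Real.exp l - l * Real.exp (-(l*t)))^2)
        / (Real.exp (-(l*t)) + t * Real.exp l)^2 + 1/(1+t)^2)
  · -- continuity
    have hA : Continuous (fun t : ℝ => Real.exp (-(l*t)) + t * Real.exp l) := by fun_prop
    have h1 : ContinuousOn (fun t : ℝ => Real.log (Real.exp (-(l*t)) + t * Real.exp l))
        (Set.Ici 0) :=
      ContinuousOn.log hA.continuousOn (fun t ht => (hApos t ht).ne')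
    have h2 : ContinuousOn (fun t : ℝ => Real.log (1+t)) (Set.Ici 0) :=
      ContinuousOn.log (by fun_prop) (fun t ht => by
        have : (0:ℝ) ≤ t := ht
        positivity)
    exact h1.sub h2
  · -- first derivative
    intro t ht
    rw [interior_Ici] at ht
    have htpos : (0:ℝ) < t := ht
    have hA := hasDerivAt_A l t
    have hlog1 : HasDerivAt (fun t => Real.log (Real.exp (-(l*t)) + t * Real.exp l))
        ((Real.exp l - l * Real.exp (-(l*t))) / (Real.exp (-(l*t)) + t * Real.exp l)) t :=
      hA.log (hApos t htpos.le).ne'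
    have h1t : HasDerivAt (fun t : ℝ => 1 + t) 1 t := by
      simpa using (hasDerivAt_id t).const_add 1
    have hlog2 : HasDerivAt (fun t : ℝ => Real.log (1+t)) (1/(1+t)) t := by
      have := h1t.log (by positivity : (1:ℝ)+t ≠ 0)
      simpa using this
    exact ((hlog1.sub hlog2)).hasDerivWithinAt
  · -- second derivative
    intro t ht
    rw [interior_Ici] at ht
    have htpos : (0:ℝ) < t := ht
    have hA := hasDerivAt_A l t
    have hN := hasDerivAt_N l t
    have hAne : (Real.exp (-(l*t)) + t * Real.exp l) ≠ 0 := (hApos t htpos.le).ne'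
    have hdiv : HasDerivAt
        (fun t => (Real.exp l - l * Real.exp (-(l*t))) / (Real.exp (-(l*t)) + t * Real.exp l))
        ((l^2 * Real.exp (-(l*t)) * (Real.exp (-(l*t)) + t * Real.exp l)
          - (Real.exp l - l * Real.exp (-(l*t))) * (Real.exp l - l * Real.exp (-(l*t))))
          / (Real.exp (-(l*t)) + t * Real.exp l)^2) t := hN.div hA hAne
    have h1t : HasDerivAt (fun t : ℝ => 1 + t) 1 t := by
      simpa using (hasDerivAt_id t).const_add 1
    have hinv : HasDerivAt (fun t : ℝ => 1/(1+t)) (-(1/(1+t)^2)) t := by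
      have := (hasDerivAt_const t (1:ℝ)).div h1t (by positivity : (1:ℝ)+t ≠ 0)
      exact this.congr_deriv (by ring)
    have := hdiv.sub hinv
    exact (this.congr_deriv (by ring)).hasDerivWithinAt
  · -- nonpositivity
    intro t ht
    rw [interior_Ici] at ht
    exact KI hl ht

/-- Hoeffding-type upper bound on the cumulant function for sums of independent
centered random variables bounded above by 1. -/
theorem cumulant_hoeffding_bound {Ω : Type*} [MeasurableSpace Ω] (μ : Measure Ω)
    [IsProbabilityMeasure μ] (n : ℕ) (ξ : Fin n → Ω → ℝ) (σ : ℝ)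
    (hmeas : ∀ i, Measurable (ξ i))
    (hindep : iIndepFun ξ μ)
    (hint : ∀ i, Integrable (ξ i) μ) (hmean : ∀ i, ∫ ω, ξ i ω ∂μ = 0)
    (hbdd : ∀ i, ∀ᵐ ω ∂μ, ξ i ω ≤ 1)
    (hint2 : ∀ i, Integrable (fun ω => (ξ i ω) ^ 2) μ)
    (hσ : σ ^ 2 = ∑ i, ∫ ω, (ξ i ω) ^ 2 ∂μ) :
    ∀ l : ℝ, 0 ≤ l →
      ∑ i, Real.log (∫ ω, Real.exp (l * ξ i ω) ∂μ)
        ≤ n * Real.log (1 / (1 + σ ^ 2 / n) * Real.exp (-l * (σ ^ 2 / n))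
            + (σ ^ 2 / n) / (1 + σ ^ 2 / n) * Real.exp l) := by
  intro l hl
  rcases Nat.eq_zero_or_pos n with hn | hn
  · subst hn
    simp
  have hn0 : (0:ℝ) < (n:ℝ) := by exact_mod_cast hn
  set ψ : ℝ → ℝ := fun t => Real.log (Real.exp (-(l*t)) + t * Real.exp l) - Real.log (1+t)
    with hψdef
  set v : Fin n → ℝ := fun i => ∫ ω, (ξ i ω) ^ 2 ∂μ with hvdef
  have hv : ∀ i, 0 ≤ v i := fun i => integral_nonneg (fun ω => sq_nonneg _)
  have hlogeq : ∀ t : ℝ, 0 ≤ t →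
      Real.log (1 / (1 + t) * Real.exp (-(l*t)) + t / (1 + t) * Real.exp l) = ψ t := by
    intro t ht
    have ht1 : (0:ℝ) < 1 + t := by linarith
    have hApos : (0:ℝ) < Real.exp (-(l*t)) + t * Real.exp l := by
      have := Real.exp_pos (-(l*t)); have := Real.exp_pos l; nlinarith
    have : 1 / (1 + t) * Real.exp (-(l*t)) + t / (1 + t) * Real.exp l
        = (Real.exp (-(l*t)) + t * Real.exp l) / (1 + t) := by
      field_simp
    rw [this, Real.log_div hApos.ne' ht1.ne', hψdef]
  have hstep : ∀ i, Real.log (∫ ω, Real.exp (l * ξ i ω) ∂μ) ≤ ψ (v i) := by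
    intro i
    obtain ⟨hi_int, hi_le⟩ := mgf_step μ (ξ i) l hl (hmeas i) (hint i) (hmean i) (hbdd i)
      (hint2 i)
    haveI : NeZero μ := ⟨IsProbabilityMeasure.ne_zero μ⟩
    have hpos : 0 < ∫ ω, Real.exp (l * ξ i ω) ∂μ := integral_exp_pos hi_int
    have := Real.log_le_log hpos hi_le
    rwa [hlogeq (v i) (hv i)] at this
  have hsum1 : ∑ i, Real.log (∫ ω, Real.exp (l * ξ i ω) ∂μ) ≤ ∑ i, ψ (v i) :=
    Finset.sum_le_sum (fun i _ => hstep i)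
  -- Jensen
  have hw : ∑ _i : Fin n, (n:ℝ)⁻¹ = 1 := by
    simp [Finset.card_univ]
    field_simp
  have hjensen := (concave_psi hl).le_map_sum (t := Finset.univ)
    (w := fun _ : Fin n => (n:ℝ)⁻¹) (p := v)
    (fun i _ => by positivity) hw (fun i _ => hv i)
  have hcenter : ∑ i, (n:ℝ)⁻¹ • v i = σ ^ 2 / n := by
    rw [hσ]
    simp only [smul_eq_mul, ← Finset.mul_sum]
    rw [hvdef]
    ring
  rw [hcenter] at hjensen
  have hσn : 0 ≤ σ ^ 2 / n := by positivity
  have hfinal : ∑ i, ψ (v i) ≤ (n:ℝ) * ψ (σ ^ 2 / n) := by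
    have : ∑ i, (n:ℝ)⁻¹ • ψ (v i) = (n:ℝ)⁻¹ * ∑ i, ψ (v i) := by
      simp only [smul_eq_mul, ← Finset.mul_sum]
    rw [this] at hjensen
    calc ∑ i, ψ (v i) = (n:ℝ) * ((n:ℝ)⁻¹ * ∑ i, ψ (v i)) := by field_simp
    _ ≤ (n:ℝ) * ψ (σ ^ 2 / n) := by
        apply mul_le_mul_of_nonneg_left hjensen hn0.le
  have hrhs : Real.log (1 / (1 + σ ^ 2 / n) * Real.exp (-l * (σ ^ 2 / n))
      + (σ ^ 2 / n) / (1 + σ ^ 2 / n) * Real.exp l) = ψ (σ ^ 2 / n) := by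
    rw [show -l * (σ ^ 2 / n) = -(l * (σ ^ 2 / n)) by ring]
    exact hlogeq _ hσn
  rw [hrhs]
  linarith
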